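/- arXiv:2006.03545 — 2 statements merged into one kernel-verified Lean document; each statement's English description precedes it below -/
import Mathlib

section
/- (Lemma 2, explicit form.) Let K ≥ 2 and d ≥ 1 be natural numbers, γ ∈ (0,1), ŷ, y ∈ Fin K, and x : Fin d → ℝ. Let P(r) := (1−γ)·I[r = ŷ] + γ/K for r ∈ Fin K, let ρ0, ρ1 ≥ 0 with ρ0 + ρ1 < 1, β := 1 − ρ0 − ρ1, h0 := −ρ0/β, h1 := (1−ρ0)/β, and for i ∈ Fin K let q(i) := (1−ρ1) if i = y and q(i) := ρ0 otherwise. Then for every r ∈ Fin K and j ∈ Fin d, the expected update entry Σ_{i ∈ Fin K} P(i) · x_j · ( (q(i)·h1 + (1−q(i))·h0) · I[i = r] / P(r) − I[ŷ = r] ) equals x_j · ( I[y = r] − I[ŷ = r] ), i.e. the update matrix H used by RCNBF is, in expectation over the drawn label ỹ and the noisy feedback f_ρ, equal to the multiclass Perceptron update matrix U with U_{r,j} = x_j·(I[y = r] − I[ŷ = r]). -/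
theorem expected_update_matrix_eq_perceptron_update
    (K d : ℕ) (hK : 2 ≤ K) (hd : 1 ≤ d)
    (γ : ℝ) (hγ : γ ∈ Set.Ioo (0 : ℝ) 1)
    (yhat y : Fin K) (x : Fin d → ℝ)
    (ρ0 ρ1 : ℝ) (hρ0 : 0 ≤ ρ0) (hρ1 : 0 ≤ ρ1) (hsum : ρ0 + ρ1 < 1)
    (β : ℝ) (hβ : β = 1 - ρ0 - ρ1)
    (h0 : ℝ) (hh0 : h0 = -ρ0 / β)
    (h1 : ℝ) (hh1 : h1 = (1 - ρ0) / β)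
    (P : Fin K → ℝ) (hP : ∀ r, P r = (1 - γ) * (if r = yhat then 1 else 0) + γ / K)
    (q : Fin K → ℝ) (hq : ∀ i, q i = if i = y then 1 - ρ1 else ρ0) :
    ∀ (r : Fin K) (j : Fin d),
      ∑ i : Fin K,
          P i * (x j * ((q i * h1 + (1 - q i) * h0) * (if i = r then 1 else 0) / P r
            - (if yhat = r then 1 else 0)))
        = x j * ((if y = r then 1 else 0) - (if yhat = r then 1 else 0)) := by
  intro r j
  subst hβ
  have hβpos : (0:ℝ) < 1 - ρ0 - ρ1 := by linarith
  have hβne : (1 - ρ0 - ρ1) ≠ 0 := ne_of_gt hβpos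
  have hKpos : (0:ℝ) < K := by positivity
  have hPpos : ∀ i, 0 < P i := by
    intro i
    rw [hP i]
    have h1γ : 0 ≤ 1 - γ := by linarith [hγ.2]
    have : 0 < γ / K := div_pos hγ.1 hKpos
    split <;> nlinarith
  have hkey : ∀ i, q i * h1 + (1 - q i) * h0 = if i = y then 1 else 0 := by
    intro i
    rw [hq, hh0, hh1]
    split <;> (field_simp; ring)
  have hsumP : ∑ i : Fin K, P i = 1 := by
    have : ∑ i : Fin K, P i
        = ∑ i : Fin K, ((1 - γ) * (if i = yhat then 1 else 0) + γ / K) := by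
      exact Finset.sum_congr rfl fun i _ => hP i
    rw [this, Finset.sum_add_distrib, Finset.sum_const, ← Finset.mul_sum,
      Finset.sum_ite_eq' Finset.univ yhat (fun _ => (1:ℝ))]
    simp only [Finset.mem_univ, if_true, Finset.card_univ, Fintype.card_fin, nsmul_eq_mul]
    field_simp
    ring
  have hPr : P r ≠ 0 := ne_of_gt (hPpos r)
  have hexp : ∀ i : Fin K,
      P i * (x j * ((q i * h1 + (1 - q i) * h0) * (if i = r then 1 else 0) / P r
            - (if yhat = r then 1 else 0)))
      = (if i = r then P i * (x j * (if i = y then 1 else 0)) / P r else 0)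
        - P i * (x j * (if yhat = r then 1 else 0)) := by
    intro i
    rw [hkey]
    by_cases h1' : i = r <;> by_cases h2' : yhat = r <;> by_cases h3' : r = y <;>
      simp [h1', h2', h3'] <;> (try split_ifs) <;> ring
  rw [Finset.sum_congr rfl fun i _ => hexp i, Finset.sum_sub_distrib,
    Finset.sum_ite_eq' Finset.univ r]
  simp only [Finset.mem_univ, if_true]
  rw [← Finset.sum_mul, hsumP]
  by_cases hyr : y = r <;> by_cases hhr : yhat = r <;>
    simp [hyr, hhr, eq_comm, div_mul_cancel₀, hPr] <;> field_simp
end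

section
/- (Lemma 3.) Let K ≥ 2 and d ≥ 1 be natural numbers, γ ∈ (0, 1/2], ŷ, y ∈ Fin K, and x : Fin d → ℝ. Let ρ0, ρ1 ≥ 0 with ρ0 + ρ1 < 1, β := 1 − ρ0 − ρ1, h0 := −ρ0/β, h1 := (1−ρ0)/β, P(r) := (1−γ)·I[r = ŷ] + γ/K, and for i ∈ Fin K let q(i) := (1−ρ1) if i = y and q(i) := ρ0 otherwise. Define the expected squared Frobenius norm of the update matrix E := Σ_{i ∈ Fin K} P(i) · ( q(i)·N(i, h1) + (1 − q(i))·N(i, h0) ), where N(i, h) := Σ_{r ∈ Fin K} Σ_{j ∈ Fin d} ( x_j·( h·I[i = r]/P(r) − I[ŷ = r] ) )². Then E ≤ ‖x‖² · ( A1·I[y ≠ ŷ] + A2·I[y = ŷ] ), where A1 = 2K/γ + 2ρ0(1−ρ0)K/(βγ) + Kρ1/(β²γ) + ρ0(1−ρ0)K²/(β²γ²) and A2 = 2γ + ρ1/(β²(1−γ)) + ρ0(1−ρ0)K²/(β²γ), and ‖x‖² := Σ_{j} x_j². -/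
set_option maxHeartbeats 1000000 in
theorem expected_squared_norm_update_matrix_bound
    (K d : ℕ) (hK : 2 ≤ K) (hd : 1 ≤ d)
    (γ : ℝ) (hγ : γ ∈ Set.Ioc (0 : ℝ) (1 / 2))
    (yhat y : Fin K) (x : Fin d → ℝ)
    (ρ0 ρ1 : ℝ) (hρ0 : 0 ≤ ρ0) (hρ1 : 0 ≤ ρ1) (hsum : ρ0 + ρ1 < 1)
    (β : ℝ) (hβ : β = 1 - ρ0 - ρ1)
    (h0 : ℝ) (hh0 : h0 = -ρ0 / β)
    (h1 : ℝ) (hh1 : h1 = (1 - ρ0) / β)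
    (P : Fin K → ℝ) (hP : ∀ r, P r = (1 - γ) * (if r = yhat then 1 else 0) + γ / K)
    (q : Fin K → ℝ) (hq : ∀ i, q i = if i = y then 1 - ρ1 else ρ0)
    (N : Fin K → ℝ → ℝ)
    (hN : ∀ i h, N i h = ∑ r : Fin K, ∑ j : Fin d,
        (x j * (h * (if i = r then 1 else 0) / P r - (if yhat = r then 1 else 0))) ^ 2)
    (E : ℝ) (hE : E = ∑ i : Fin K, P i * (q i * N i h1 + (1 - q i) * N i h0))
    (A1 : ℝ) (hA1 : A1 = 2 * K / γ + 2 * ρ0 * (1 - ρ0) * K / (β * γ)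
        + K * ρ1 / (β ^ 2 * γ) + ρ0 * (1 - ρ0) * K ^ 2 / (β ^ 2 * γ ^ 2))
    (A2 : ℝ) (hA2 : A2 = 2 * γ + ρ1 / (β ^ 2 * (1 - γ))
        + ρ0 * (1 - ρ0) * K ^ 2 / (β ^ 2 * γ)) :
    E ≤ (∑ j : Fin d, (x j) ^ 2) *
        (A1 * (if y ≠ yhat then 1 else 0) + A2 * (if y = yhat then 1 else 0)) := by
  obtain ⟨hγ0, hγ2⟩ := hγ
  have hK2 : (2:ℝ) ≤ (K:ℝ) := by exact_mod_cast hK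
  have hKpos : (0:ℝ) < (K:ℝ) := by linarith
  have hβpos : 0 < β := by rw [hβ]; linarith
  have h1ρ0 : 0 ≤ 1 - ρ0 := by linarith
  have h1ρ1 : 0 ≤ 1 - ρ1 := by linarith
  have h1γ : (0:ℝ) < 1 - γ := by linarith
  set S := ∑ j : Fin d, (x j) ^ 2 with hSdef
  have hSnn : 0 ≤ S := Finset.sum_nonneg fun j _ => sq_nonneg _
  -- values of P
  have hPo : ∀ r : Fin K, r ≠ yhat → P r = γ / K := by
    intro r hr; simp [hP, hr]
  have hPy : P yhat = 1 - γ + γ / K := by simp [hP]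
  have hapos : 0 < γ / (K:ℝ) := div_pos hγ0 hKpos
  have haγ : γ / (K:ℝ) ≤ γ / 2 := by
    apply div_le_div_of_nonneg_left hγ0.le (by norm_num) hK2
  have hbge : 1 - γ ≤ P yhat := by rw [hPy]; linarith
  have hbhalf : (1:ℝ)/2 ≤ P yhat := by linarith
  have hble : P yhat ≤ 1 := by rw [hPy]; linarith
  have hbpos : 0 < P yhat := by linarith
  have hane : γ / (K:ℝ) ≠ 0 := ne_of_gt hapos
  -- the scalar second moment function
  set G : Fin K → ℝ → ℝ := fun i h => ∑ r : Fin K,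
      (h * (if i = r then 1 else 0) / P r - (if yhat = r then 1 else 0)) ^ 2 with hGdef
  have hNG : ∀ i h, N i h = S * G i h := by
    intro i h
    rw [hN, hGdef, Finset.mul_sum]
    refine Finset.sum_congr rfl fun r _ => ?_
    calc ∑ j : Fin d, (x j * (h * (if i = r then 1 else 0) / P r -
            (if yhat = r then 1 else 0))) ^ 2
        = ∑ j : Fin d, (x j) ^ 2 * (h * (if i = r then 1 else 0) / P r -
            (if yhat = r then 1 else 0)) ^ 2 := by
          refine Finset.sum_congr rfl fun j _ => ?_; ring
      _ = S * (h * (if i = r then 1 else 0) / P r - (if yhat = r then 1 else 0)) ^ 2 := by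
          rw [← Finset.sum_mul]
  -- closed forms of G
  have hGyhat : ∀ h : ℝ, G yhat h = (h / P yhat - 1) ^ 2 := by
    intro h
    simp only [hGdef]
    have hcong : ∀ r : Fin K, (h * (if yhat = r then 1 else 0) / P r -
        (if yhat = r then 1 else 0)) ^ 2 = if yhat = r then (h / P yhat - 1) ^ 2 else 0 := by
      intro r
      by_cases hr : yhat = r
      · subst hr; simp
      · simp [hr]
    rw [Finset.sum_congr rfl fun r _ => hcong r]
    simp
  have hGoth : ∀ (i : Fin K) (h : ℝ), i ≠ yhat →
      G i h = (h / (γ / K)) ^ 2 + 1 := by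
    intro i h hi
    simp only [hGdef]
    have hcong : ∀ r : Fin K, (h * (if i = r then 1 else 0) / P r -
        (if yhat = r then 1 else 0)) ^ 2 =
        (if i = r then (h / (γ / K)) ^ 2 else 0) + (if yhat = r then 1 else 0) := by
      intro r
      by_cases h1r : i = r
      · subst h1r
        have h2r : yhat ≠ i := Ne.symm hi
        simp [h2r, hPo i hi]
      · by_cases h2r : yhat = r
        · subst h2r; simp [h1r]
        · simp [h1r, h2r]
    rw [Finset.sum_congr rfl fun r _ => hcong r]
    rw [Finset.sum_add_distrib]
    simp
  -- E = S * T
  have hET : E = S * ∑ i : Fin K, P i * (q i * G i h1 + (1 - q i) * G i h0) := by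
    rw [hE, Finset.mul_sum]
    refine Finset.sum_congr rfl fun i _ => ?_
    rw [hNG, hNG]; ring
  -- the "generic" term value (i ≠ yhat, i ≠ y)
  set c₀ : ℝ := γ / K * (ρ0 * ((h1 / (γ / K)) ^ 2 + 1) + (1 - ρ0) * ((h0 / (γ / K)) ^ 2 + 1))
    with hc₀def
  have hc₀ : c₀ = γ / K + ρ0 * (1 - ρ0) * K / (β ^ 2 * γ) := by
    rw [hc₀def, hh0, hh1]
    field_simp
    ring
  -- useful scalar bounds
  have hKγ : (4:ℝ) ≤ (K:ℝ) / γ := by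
    rw [le_div_iff₀ hγ0]; linarith only [hγ2, hK2]
  have L1 : ((K:ℝ) - 1) * (γ / K) ≤ γ := by
    have h : ((K:ℝ) - 1) * (γ / K) = (((K:ℝ) - 1) * γ) / K := by ring
    rw [h, div_le_iff₀ hKpos]; linarith only [hγ0]
  have hβ2γ : 0 < β ^ 2 * γ := by positivity
  have L2 : ((K:ℝ) - 1) * (ρ0 * (1 - ρ0) * K / (β ^ 2 * γ)) ≤
      ρ0 * (1 - ρ0) * (K:ℝ) ^ 2 / (β ^ 2 * γ) := by
    have h : ((K:ℝ) - 1) * (ρ0 * (1 - ρ0) * K / (β ^ 2 * γ)) =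
        (((K:ℝ) - 1) * (ρ0 * (1 - ρ0) * K)) / (β ^ 2 * γ) := by ring
    rw [h, div_le_div_iff_of_pos_right hβ2γ]
    linarith only [mul_nonneg (mul_nonneg hρ0 h1ρ0) hKpos.le]
  have L4 : (1 - P yhat) ^ 2 / P yhat ≤ γ := by
    rw [div_le_iff₀ hbpos]
    linarith only [mul_nonneg (by linarith only [hbge] : (0:ℝ) ≤ γ - (1 - P yhat))
        (by linarith only [hble] : (0:ℝ) ≤ 1 - P yhat),
      mul_nonneg hγ0.le (by linarith only [hbhalf] : (0:ℝ) ≤ 2 * P yhat - 1)]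
  rcases eq_or_ne y yhat with hyy | hyy
  · -- CASE y = yhat
    subst hyy
    -- special term at i = y (= yhat)
    set D : ℝ := P y * ((1 - ρ1) * (h1 / P y - 1) ^ 2 + ρ1 * (h0 / P y - 1) ^ 2) with hDdef
    have hterm : ∀ i : Fin K, P i * (q i * G i h1 + (1 - q i) * G i h0) =
        c₀ + (if i = y then D - c₀ else 0) := by
      intro i
      by_cases hi : i = y
      · subst hi
        rw [hq, if_pos rfl, hGyhat, hGyhat, if_pos rfl, hDdef]
        ring
      · rw [hq, if_neg hi, hGoth i h1 hi, hGoth i h0 hi, if_neg hi, hPo i hi, hc₀def]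
        ring
    have hsum2 : (∑ i : Fin K, P i * (q i * G i h1 + (1 - q i) * G i h0)) =
        (K:ℝ) * c₀ + (D - c₀) := by
      rw [Finset.sum_congr rfl fun i _ => hterm i, Finset.sum_add_distrib]
      simp [Finset.sum_ite_eq', mul_comm]
    have hD : D = ρ1 * (1 - ρ1) / (β ^ 2 * P y) + (1 - P y) ^ 2 / P y := by
      rw [hDdef, hh0, hh1, hβ]
      have hβ' : (1:ℝ) - ρ0 - ρ1 ≠ 0 := by rw [← hβ]; exact ne_of_gt hβpos
      field_simp
      ring
    have L3 : ρ1 * (1 - ρ1) / (β ^ 2 * P y) ≤ ρ1 / (β ^ 2 * (1 - γ)) := by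
      have hd1 : 0 < β ^ 2 * P y := by positivity
      have hd2 : 0 < β ^ 2 * (1 - γ) := by positivity
      rw [div_le_div_iff₀ hd1 hd2]
      linarith only [mul_nonneg (mul_nonneg hρ1 (sq_nonneg β)) (sub_nonneg.2 hbge),
        mul_nonneg (mul_nonneg (mul_nonneg hρ1 hρ1) (sq_nonneg β)) h1γ.le]
    have hT : (K:ℝ) * c₀ + (D - c₀) ≤ A2 := by
      have hexp : (K:ℝ) * c₀ + (D - c₀) =
          ((K:ℝ) - 1) * (γ / K) + ((K:ℝ) - 1) * (ρ0 * (1 - ρ0) * K / (β ^ 2 * γ)) + D := by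
        rw [hc₀]; ring
      rw [hexp, hD, hA2]
      linarith only [L1, L2, L3, L4]
    have e1 : (if y ≠ y then (1:ℝ) else 0) = 0 := by simp
    have e2 : (if y = y then (1:ℝ) else 0) = 1 := by simp
    rw [hET, hsum2, e1, e2, mul_zero, mul_one, zero_add]
    exact mul_le_mul_of_nonneg_left hT hSnn
  · -- CASE y ≠ yhat
    have hyne : y ≠ yhat := hyy
    set D1 : ℝ := P yhat * (ρ0 * (h1 / P yhat - 1) ^ 2 + (1 - ρ0) * (h0 / P yhat - 1) ^ 2)
      with hD1def
    set D2 : ℝ := γ / K * ((1 - ρ1) * ((h1 / (γ / K)) ^ 2 + 1) + ρ1 * ((h0 / (γ / K)) ^ 2 + 1))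
      with hD2def
    have hterm : ∀ i : Fin K, P i * (q i * G i h1 + (1 - q i) * G i h0) =
        c₀ + (if i = yhat then D1 - c₀ else 0) + (if i = y then D2 - c₀ else 0) := by
      intro i
      by_cases hi : i = yhat
      · subst hi
        rw [hq, if_neg (Ne.symm hyne), hGyhat, hGyhat, if_pos rfl, if_neg (Ne.symm hyne), hD1def]
        ring
      · by_cases hi2 : i = y
        · subst hi2
          rw [hq, if_pos rfl, hGoth i h1 hi, hGoth i h0 hi, if_neg hi, if_pos rfl,
            hPo i hi, hD2def]
          ring
        · rw [hq, if_neg hi2, hGoth i h1 hi, hGoth i h0 hi, if_neg hi, if_neg hi2,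
            hPo i hi, hc₀def]
          ring
    have hsum2 : (∑ i : Fin K, P i * (q i * G i h1 + (1 - q i) * G i h0)) =
        (K:ℝ) * c₀ + (D1 - c₀) + (D2 - c₀) := by
      rw [Finset.sum_congr rfl fun i _ => hterm i, Finset.sum_add_distrib,
        Finset.sum_add_distrib]
      simp [Finset.sum_ite_eq', mul_comm]
    have hD1 : D1 = ρ0 * (1 - ρ0) / (β ^ 2 * P yhat) + P yhat := by
      rw [hD1def, hh0, hh1]
      field_simp
      ring
    have hD2 : D2 = γ / K + (K:ℝ) / γ + ρ1 * (1 - ρ1) * K / (β ^ 2 * γ) := by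
      rw [hD2def, hh0, hh1, hβ]
      have hβ' : (1:ℝ) - ρ0 - ρ1 ≠ 0 := by rw [← hβ]; exact ne_of_gt hβpos
      field_simp
      ring
    -- bounds
    have M2 : ρ0 * (1 - ρ0) / (β ^ 2 * P yhat) ≤ 2 * (ρ0 * (1 - ρ0)) / β ^ 2 := by
      have hd1 : 0 < β ^ 2 * P yhat := by positivity
      have hd2 : (0:ℝ) < β ^ 2 := by positivity
      rw [div_le_div_iff₀ hd1 hd2]
      linarith only [mul_nonneg (mul_nonneg (mul_nonneg hρ0 h1ρ0) (sq_nonneg β))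
        (by linarith only [hbhalf] : (0:ℝ) ≤ 2 * P yhat - 1)]
    have M3 : ρ1 * (1 - ρ1) * (K:ℝ) / (β ^ 2 * γ) ≤ (K:ℝ) * ρ1 / (β ^ 2 * γ) := by
      rw [div_le_div_iff₀ hβ2γ hβ2γ]
      linarith only [mul_nonneg (mul_nonneg (mul_nonneg hρ1 hρ1) hKpos.le) hβ2γ.le]
    -- key polynomial bound : (K-2)K/γ + 2 ≤ K²/γ²
    have key : ((K:ℝ) - 2) * K / γ + 2 ≤ (K:ℝ) ^ 2 / γ ^ 2 := by
      have hγ2pos : (0:ℝ) < γ ^ 2 := by positivity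
      have heq : ((K:ℝ) - 2) * K / γ + 2 = (((K:ℝ) - 2) * K * γ + 2 * γ ^ 2) / γ ^ 2 := by
        field_simp
      rw [heq, div_le_div_iff_of_pos_right hγ2pos]
      linarith only [mul_nonneg (mul_nonneg hKpos.le hKpos.le) h1γ.le,
        mul_nonneg hγ0.le (by linarith only [hK2, hγ2] : (0:ℝ) ≤ (K:ℝ) - γ)]
    have M4 : ((K:ℝ) - 2) * (ρ0 * (1 - ρ0) * K / (β ^ 2 * γ)) + 2 * (ρ0 * (1 - ρ0)) / β ^ 2 ≤
        ρ0 * (1 - ρ0) * (K:ℝ) ^ 2 / (β ^ 2 * γ ^ 2) := by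
      have heqL : ((K:ℝ) - 2) * (ρ0 * (1 - ρ0) * K / (β ^ 2 * γ)) +
          2 * (ρ0 * (1 - ρ0)) / β ^ 2 =
          ρ0 * (1 - ρ0) / β ^ 2 * (((K:ℝ) - 2) * K / γ + 2) := by
        field_simp
      have heqR : ρ0 * (1 - ρ0) * (K:ℝ) ^ 2 / (β ^ 2 * γ ^ 2) =
          ρ0 * (1 - ρ0) / β ^ 2 * ((K:ℝ) ^ 2 / γ ^ 2) := by
        field_simp
      rw [heqL, heqR]
      exact mul_le_mul_of_nonneg_left key (by positivity)
    have M5 : (0:ℝ) ≤ 2 * ρ0 * (1 - ρ0) * K / (β * γ) := by positivity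
    have hT : (K:ℝ) * c₀ + (D1 - c₀) + (D2 - c₀) ≤ A1 := by
      have hexp : (K:ℝ) * c₀ + (D1 - c₀) + (D2 - c₀) =
          ((K:ℝ) - 2) * (γ / K) + ((K:ℝ) - 2) * (ρ0 * (1 - ρ0) * K / (β ^ 2 * γ))
            + D1 + D2 := by
        rw [hc₀]; ring
      have LK : ((K:ℝ) - 2) * (γ / K) ≤ γ := by
        have h : ((K:ℝ) - 2) * (γ / K) = (((K:ℝ) - 2) * γ) / K := by ring
        rw [h, div_le_iff₀ hKpos]; linarith only [hγ0]
      rw [hexp, hD1, hD2, hA1]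
      have haux : γ / (K:ℝ) ≤ 1 := by linarith only [haγ, hγ2]
      -- remaining: γ + 1 + γ/K + K/γ ≤ 2K/γ  plus quadratic-ρ0 part and ρ1 part
      have hsmall : γ + P yhat + γ / (K:ℝ) + (K:ℝ) / γ ≤ 2 * (K:ℝ) / γ := by
        have h2 : 2 * (K:ℝ) / γ = (K:ℝ) / γ + (K:ℝ) / γ := by ring
        rw [h2]
        have : γ + P yhat + γ / (K:ℝ) ≤ (K:ℝ) / γ := by
          linarith only [hγ2, hble, haγ, hKγ]
        linarith only [this, hKγ]
      linarith only [M2, M3, M4, M5, LK, hsmall]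
    have e1 : (if y ≠ yhat then (1:ℝ) else 0) = 1 := by simp [hyne]
    have e2 : (if y = yhat then (1:ℝ) else 0) = 0 := by simp [hyne]
    rw [hET, hsum2, e1, e2, mul_zero, mul_one, add_zero]
    exact mul_le_mul_of_nonneg_left hT hSnn
end
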